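/- arXiv:1905.09024 — 9 statements merged into one kernel-verified Lean document; each statement's English description precedes it below -/
import Mathlib

section
/- Let v : ℝ → ℝ be an odd differentiable function and f : ℝ → ℝ be twice differentiable. Then the square of the Dunkl operator equals the Hamiltonian with reflection: for all x ∈ ℝ, (L_v (L_v f))(x) = −f''(x) + v(x)²·f(x) − v'(x)·f(−x). -/
/-- The Dunkl operator `L_v f : x ↦ d/dx[f(-x)] + v(x)·f(x)`. -/
noncomputable def dunkl (v f : ℝ → ℝ) : ℝ → ℝ :=
  fun x => deriv (f ∘ Neg.neg) x + v x * f x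

/-- The square of the Dunkl operator is the Hamiltonian with reflection. -/
theorem dunkl_sq_eq_hamiltonian (v f : ℝ → ℝ)
    (hv : ∀ x : ℝ, v (-x) = -v x) (hv' : Differentiable ℝ v)
    (hf : Differentiable ℝ f) (hf' : Differentiable ℝ (deriv f)) :
    ∀ x : ℝ, dunkl v (dunkl v f) x =
      -(deriv (deriv f) x) + (v x) ^ 2 * f x - deriv v x * f (-x) := by
  intro x
  have key : ∀ y : ℝ, dunkl v f y = -deriv f (-y) + v y * f y := by
    intro y
    have : deriv (f ∘ Neg.neg) y = -deriv f (-y) := by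
      simpa [Function.comp_def] using deriv_comp_neg (f := f) (x := y)
    simp [dunkl, this]
  have hcomp : (dunkl v f) ∘ Neg.neg = fun y => -deriv f y - v y * f (-y) := by
    funext y
    simp only [Function.comp_apply]
    rw [key (-y), hv y, neg_neg]
    ring
  have hB : HasDerivAt (fun y : ℝ => f (-y)) (-deriv f (-x)) x := by
    have := ((hf (-x)).hasDerivAt).comp x (hasDerivAt_neg x)
    simpa [mul_comm, Function.comp_def] using this
  have hA : HasDerivAt (deriv f) (deriv (deriv f) x) x := (hf' x).hasDerivAt
  have hvx : HasDerivAt v (deriv v x) x := (hv' x).hasDerivAt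
  have hg : HasDerivAt (fun y : ℝ => -deriv f y - v y * f (-y))
      (-(deriv (deriv f) x) - (deriv v x * f (-x) + v x * (-deriv f (-x)))) x :=
    hA.neg.sub (hvx.mul hB)
  have hd : deriv ((dunkl v f) ∘ Neg.neg) x
      = -(deriv (deriv f) x) - (deriv v x * f (-x) + v x * (-deriv f (-x))) := by
    rw [hcomp]; exact hg.deriv
  show deriv ((dunkl v f) ∘ Neg.neg) x + v x * dunkl v f x = _
  rw [hd, key x]
  ring
end

section
/- Let v : ℝ → ℝ be an odd function, ν ∈ ℝ, and let ψ : ℝ → ℝ be differentiable with L_v ψ = ν·ψ (pointwise on ℝ). Then the reflected function ψ̃ : x ↦ ψ(−x) satisfies L_v ψ̃ = −ν·ψ̃ pointwise on ℝ; thus eigenfunctions of L_v come in pairs with opposite eigenvalues ±ν. -/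
/-- Eigenfunctions of the Dunkl operator come in pairs with opposite eigenvalues. -/
theorem dunkl_eigen_reflection (v ψ : ℝ → ℝ) (ν : ℝ)
    (hv : ∀ x : ℝ, v (-x) = -v x) (hψ : Differentiable ℝ ψ)
    (heig : ∀ x : ℝ, dunkl v ψ x = ν * ψ x) :
    ∀ x : ℝ, dunkl v (fun y => ψ (-y)) x = -ν * ψ (-x) := by
  intro x
  have hcomp : ((fun y => ψ (-y)) ∘ Neg.neg) = ψ := by
    funext y; simp [Function.comp]
  have h1 : deriv (ψ ∘ Neg.neg) (-x) = -deriv ψ x := by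
    show deriv (fun y => ψ (-y)) (-x) = -deriv ψ x
    rw [deriv_comp_neg]; simp
  have h2 := heig (-x)
  rw [dunkl, h1, hv x] at h2
  simp only [dunkl, hcomp]
  linarith
end

section
/- Let v : ℝ → ℝ be an odd differentiable function, ν ∈ ℝ, and let ψ : ℝ → ℝ be twice differentiable with L_v ψ = ν·ψ pointwise on ℝ. Then ψ is an eigenfunction of the Hamiltonian with reflection with eigenvalue ν²: for all x ∈ ℝ, −ψ''(x) + v(x)²·ψ(x) − v'(x)·ψ(−x) = ν²·ψ(x). -/
/-- An eigenfunction of the Dunkl operator with eigenvalue ν is an eigenfunction of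
the Hamiltonian with reflection with eigenvalue ν². -/
theorem dunkl_eigen_implies_hamiltonian_eigen (v ψ : ℝ → ℝ) (ν : ℝ)
    (hv : ∀ x : ℝ, v (-x) = -v x) (hv' : Differentiable ℝ v)
    (hψ : Differentiable ℝ ψ) (hψ' : Differentiable ℝ (deriv ψ))
    (heig : ∀ x : ℝ, dunkl v ψ x = ν * ψ x) :
    ∀ x : ℝ, -(deriv (deriv ψ) x) + (v x) ^ 2 * ψ x - deriv v x * ψ (-x)
      = ν ^ 2 * ψ x := by
  -- key: deriv ψ (-x) = (v x - ν) * ψ x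
  have key : ∀ x : ℝ, deriv ψ (-x) = (v x - ν) * ψ x := by
    intro x
    have h := heig x
    simp only [dunkl] at h
    have hc : deriv (ψ ∘ Neg.neg) x = -deriv ψ (-x) := deriv_comp_neg ψ x
    rw [hc] at h
    linarith [h]
  -- hence deriv ψ x = (-(v x) - ν) * ψ (-x)
  have h1 : deriv ψ = fun x => (-(v x) - ν) * ψ (-x) := by
    funext x
    have := key (-x)
    rw [neg_neg, hv] at this
    rw [this]
  intro x
  have hψneg : Differentiable ℝ (fun y : ℝ => ψ (-y)) := hψ.comp differentiable_neg
  have hlhs : Differentiable ℝ (fun y : ℝ => -(v y) - ν) := (hv'.neg).sub_const ν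
  have h2 : deriv (deriv ψ) x = deriv (fun y => (-(v y) - ν) * ψ (-y)) x := by rw [h1]
  rw [h2, deriv_fun_mul (hlhs x) (hψneg x)]
  have hd1 : deriv (fun y : ℝ => -(v y) - ν) x = -(deriv v x) := by
    rw [deriv_fun_sub (f := fun y => -v y) ((hv'.neg) x) (differentiableAt_const ν), deriv_const, deriv.fun_neg]; ring
  have hd2 : deriv (fun y : ℝ => ψ (-y)) x = -deriv ψ (-x) := deriv_comp_neg ψ x
  rw [hd1, hd2, key x]
  ring
end

section
/- (Lemma 1, core computation.) Let v : ℝ → ℝ be an odd differentiable function, E ∈ ℝ, let e : ℝ → ℝ be an even twice differentiable function satisfying −e''(x) + (v(x)² − v'(x))·e(x) = E·e(x) for all x, and let o : ℝ → ℝ be an odd twice differentiable function satisfying −o''(x) + (v(x)² + v'(x))·o(x) = E·o(x) for all x. Then both ψ₊ = e + o and ψ₋ = e − o are eigenfunctions of the Hamiltonian with reflection with eigenvalue E: H_v ψ± = E·ψ± pointwise on ℝ. -/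
/-- The Hamiltonian with reflection `H_v f : x ↦ -f''(x) + v(x)²·f(x) - v'(x)·f(-x)`. -/
noncomputable def ham (v f : ℝ → ℝ) : ℝ → ℝ :=
  fun x => -(deriv (deriv f) x) + (v x) ^ 2 * f x - deriv v x * f (-x)

/-- Lemma 1, core computation: sums and differences of even eigenfunctions of
`H₁ = -∂² + v² - v'` and odd eigenfunctions of `H₂ = -∂² + v² + v'` with a common
eigenvalue `E` are eigenfunctions of the Hamiltonian with reflection. -/
theorem ham_eigen_of_even_odd_parts (v e o : ℝ → ℝ) (E : ℝ)
    (hv : ∀ x : ℝ, v (-x) = -v x) (hv' : Differentiable ℝ v)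
    (he_even : ∀ x : ℝ, e (-x) = e x)
    (he : Differentiable ℝ e) (he' : Differentiable ℝ (deriv e))
    (he_eig : ∀ x : ℝ, -(deriv (deriv e) x) + ((v x) ^ 2 - deriv v x) * e x = E * e x)
    (ho_odd : ∀ x : ℝ, o (-x) = -o x)
    (ho : Differentiable ℝ o) (ho' : Differentiable ℝ (deriv o))
    (ho_eig : ∀ x : ℝ, -(deriv (deriv o) x) + ((v x) ^ 2 + deriv v x) * o x = E * o x) :
    (∀ x : ℝ, ham v (fun y => e y + o y) x = E * (e x + o x)) ∧
    (∀ x : ℝ, ham v (fun y => e y - o y) x = E * (e x - o x)) := by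
  have hsum : deriv (fun y => e y + o y) = fun y => deriv e y + deriv o y := by
    funext y; exact deriv_add (he y) (ho y)
  have hdiff : deriv (fun y => e y - o y) = fun y => deriv e y - deriv o y := by
    funext y; exact deriv_sub (he y) (ho y)
  constructor <;> intro x
  · have h2 : deriv (deriv (fun y => e y + o y)) x
        = deriv (deriv e) x + deriv (deriv o) x := by
      rw [hsum]; exact deriv_add (he' x) (ho' x)
    simp only [ham, h2, he_even x, ho_odd x]
    have h1 := he_eig x
    have h3 := ho_eig x
    nlinarith [h1, h3]
  · have h2 : deriv (deriv (fun y => e y - o y)) x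
        = deriv (deriv e) x - deriv (deriv o) x := by
      rw [hdiff]; exact deriv_sub (he' x) (ho' x)
    simp only [ham, h2, he_even x, ho_odd x]
    have h1 := he_eig x
    have h3 := ho_eig x
    nlinarith [h1, h3]
end

section
/- (Dunkl-SUSY eigenfunctions for the shifted oscillator.) Let s > 0, n ≥ 1 an integer, and define ψ±(x) = e^{−s²x²/2}·(H_{2n}(s·x) ± 2√n · H_{2n−1}(s·x)). Then for all x ∈ ℝ, d/dx[ψ±(−x)] + s²x·ψ±(x) = ±2s√n · ψ±(x); that is, ψ± are eigenfunctions of the Dunkl operator L_v with v(x) = s²x, with eigenvalues ±2s√n. -/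
/-- Physicists' Hermite polynomials: `H₀ = 1`, `H₁(x) = 2x`,
`H_{n+2}(x) = 2x·H_{n+1}(x) - 2(n+1)·H_n(x)`. -/
noncomputable def hermite : ℕ → ℝ → ℝ
  | 0 => fun _ => 1
  | 1 => fun x => 2 * x
  | (n + 2) => fun x => 2 * x * hermite (n + 1) x - 2 * ((n : ℝ) + 1) * hermite n x

lemma hermite_neg : ∀ (m : ℕ) (x : ℝ), hermite m (-x) = (-1) ^ m * hermite m x := by
  intro m
  induction m using Nat.twoStepInduction with
  | zero => intro x; simp [hermite]
  | one => intro x; simp [hermite]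
  | more m ih1 ih2 =>
    intro x
    simp only [hermite, ih1, ih2]
    ring

lemma hermite_hasDerivAt : ∀ (m : ℕ) (x : ℝ),
    HasDerivAt (hermite (m + 1)) (2 * ((m : ℝ) + 1) * hermite m x) x := by
  intro m
  induction m using Nat.twoStepInduction with
  | zero =>
    intro x
    have : HasDerivAt (fun x : ℝ => 2 * x) 2 x := by
      simpa using (hasDerivAt_id x).const_mul (2 : ℝ)
    simpa [hermite] using this
  | one =>
    intro x
    have h1 : HasDerivAt (fun x : ℝ => 2 * x * hermite 1 x - 2 * ((0:ℝ) + 1) * hermite 0 x)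
        (2 * hermite 1 x + 2 * x * 2 - 0) x := by
      have hx : HasDerivAt (fun x : ℝ => 2 * x) 2 x := by
        simpa using (hasDerivAt_id x).const_mul (2 : ℝ)
      have hh1 : HasDerivAt (hermite 1) 2 x := by simpa [hermite] using hx
      have := (hx.mul hh1).sub ((hasDerivAt_const x (1:ℝ)).const_mul (2 * ((0:ℝ)+1)))
      exact this.congr_deriv (by simp)
    have h2 : (fun x : ℝ => 2 * x * hermite 1 x - 2 * ((0:ℝ) + 1) * hermite 0 x) = hermite 2 := by
      funext y; simp [hermite]
    rw [h2] at h1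
    convert h1 using 1
    simp [hermite]; ring
  | more m ih1 ih2 =>
    intro x
    have hx : HasDerivAt (fun x : ℝ => 2 * x) 2 x := by
      simpa using (hasDerivAt_id x).const_mul (2 : ℝ)
    have hA : HasDerivAt (hermite (m + 2)) (2 * ((m : ℝ) + 1 + 1) * hermite (m + 1) x) x := by
      simpa using ih2 x
    have hB : HasDerivAt (hermite (m + 1)) (2 * ((m : ℝ) + 1) * hermite m x) x := ih1 x
    have h1 := (hx.mul hA).sub (hB.const_mul (2 * (((m : ℝ) + 1) + 1)))
    have h2 : (fun x : ℝ => 2 * x * hermite (m + 2) x - 2 * (((m : ℝ) + 1) + 1) * hermite (m + 1) x)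
        = hermite (m + 3) := by
      funext y; show _ = hermite ((m + 1) + 2) y; push_cast [hermite]; ring
    change HasDerivAt (fun x : ℝ => 2 * x * hermite (m + 2) x - 2 * (((m : ℝ) + 1) + 1) * hermite (m + 1) x) _ x at h1
    rw [h2] at h1
    convert h1 using 1
    have hrec : hermite (m + 2) x = 2 * x * hermite (m + 1) x - 2 * ((m : ℝ) + 1) * hermite m x := rfl
    push_cast
    rw [hrec]; ring

lemma hermite_rec2n (n : ℕ) (hn : 1 ≤ n) (x : ℝ) :
    hermite (2 * n) x
      = 2 * x * hermite (2 * n - 1) x - 2 * (2 * (n : ℝ) - 1) * hermite (2 * n - 2) x := by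
  obtain ⟨k, rfl⟩ := Nat.exists_eq_add_of_le hn
  rw [show 2 * (1 + k) = 2 * k + 2 from by ring,
    show 2 * k + 2 - 1 = 2 * k + 1 from by omega,
    show 2 * k + 2 - 2 = 2 * k from by omega]
  show 2 * x * hermite (2 * k + 1) x - 2 * (((2 * k : ℕ) : ℝ) + 1) * hermite (2 * k) x = _
  push_cast; ring

lemma psi_hasDerivAt (s c : ℝ) (n : ℕ) (hn : 1 ≤ n) (x : ℝ) :
    HasDerivAt (fun y => Real.exp (-(s ^ 2 * y ^ 2) / 2) *
        (hermite (2 * n) (s * y) + c * hermite (2 * n - 1) (s * y)))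
      (Real.exp (-(s ^ 2 * x ^ 2) / 2) *
        (-(s ^ 2 * x) * (hermite (2 * n) (s * x) + c * hermite (2 * n - 1) (s * x))
          + s * (2 * (2 * (n : ℝ)) * hermite (2 * n - 1) (s * x))
          + c * (s * (2 * (2 * (n : ℝ) - 1) * hermite (2 * n - 2) (s * x))))) x := by
  have hsx : HasDerivAt (fun y : ℝ => s * y) s x := by
    simpa using (hasDerivAt_id x).const_mul s
  have e1 : 2 * n = (2 * n - 1) + 1 := by omega
  have e2 : 2 * n - 1 = (2 * n - 2) + 1 := by omega
  have hA : HasDerivAt (fun y => hermite (2 * n) (s * y))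
      (2 * (2 * (n : ℝ)) * hermite (2 * n - 1) (s * x) * s) x := by
    have := (hermite_hasDerivAt (2 * n - 1) (s * x)).comp x hsx
    rw [← e1] at this
    have hc : ((2 * n - 1 : ℕ) : ℝ) + 1 = 2 * (n : ℝ) := by
      have : ((2 * n - 1 : ℕ) : ℝ) = 2 * (n : ℝ) - 1 := by push_cast [Nat.cast_sub (by omega : 1 ≤ 2 * n)]; ring
      rw [this]; ring
    rwa [hc] at this
  have hB : HasDerivAt (fun y => hermite (2 * n - 1) (s * y))
      (2 * (2 * (n : ℝ) - 1) * hermite (2 * n - 2) (s * x) * s) x := by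
    have := (hermite_hasDerivAt (2 * n - 2) (s * x)).comp x hsx
    rw [← e2] at this
    have hc : ((2 * n - 2 : ℕ) : ℝ) + 1 = 2 * (n : ℝ) - 1 := by
      push_cast [Nat.cast_sub (by omega : 2 ≤ 2 * n)]; ring
    rwa [hc] at this
  have hexp : HasDerivAt (fun y : ℝ => Real.exp (-(s ^ 2 * y ^ 2) / 2))
      (Real.exp (-(s ^ 2 * x ^ 2) / 2) * (-(s ^ 2 * x))) x := by
    have hinner : HasDerivAt (fun y : ℝ => -(s ^ 2 * y ^ 2) / 2) (-(s ^ 2 * x)) x := by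
      have : HasDerivAt (fun y : ℝ => y ^ 2) (2 * x) x := by
        simpa using hasDerivAt_pow 2 x
      have := ((this.const_mul (s ^ 2)).neg).div_const 2
      exact this.congr_deriv (by ring)
    simpa using hinner.exp
  have := hexp.mul (hA.add (hB.const_mul c))
  exact this.congr_deriv (by simp only [Pi.add_apply]; ring)

/-- Dunkl-SUSY eigenfunctions for the shifted oscillator: the functions
`ψ±(x) = e^{-s²x²/2}(H_{2n}(sx) ± 2√n·H_{2n-1}(sx))` satisfy
`L_v ψ± = ±2s√n · ψ±` for `v(x) = s²x`. -/
theorem dunkl_susy_shifted_oscillator (s : ℝ) (hs : 0 < s) (n : ℕ) (hn : 1 ≤ n) :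
    (∀ x : ℝ,
      deriv ((fun y => Real.exp (-(s ^ 2 * y ^ 2) / 2) *
          (hermite (2 * n) (s * y) + 2 * Real.sqrt n * hermite (2 * n - 1) (s * y))) ∘ Neg.neg) x
        + s ^ 2 * x * (Real.exp (-(s ^ 2 * x ^ 2) / 2) *
          (hermite (2 * n) (s * x) + 2 * Real.sqrt n * hermite (2 * n - 1) (s * x)))
      = 2 * s * Real.sqrt n * (Real.exp (-(s ^ 2 * x ^ 2) / 2) *
          (hermite (2 * n) (s * x) + 2 * Real.sqrt n * hermite (2 * n - 1) (s * x)))) ∧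
    (∀ x : ℝ,
      deriv ((fun y => Real.exp (-(s ^ 2 * y ^ 2) / 2) *
          (hermite (2 * n) (s * y) - 2 * Real.sqrt n * hermite (2 * n - 1) (s * y))) ∘ Neg.neg) x
        + s ^ 2 * x * (Real.exp (-(s ^ 2 * x ^ 2) / 2) *
          (hermite (2 * n) (s * x) - 2 * Real.sqrt n * hermite (2 * n - 1) (s * x)))
      = -(2 * s * Real.sqrt n) * (Real.exp (-(s ^ 2 * x ^ 2) / 2) *
          (hermite (2 * n) (s * x) - 2 * Real.sqrt n * hermite (2 * n - 1) (s * x)))) := by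
  have heven : (-1 : ℝ) ^ (2 * n) = 1 := by
    rw [pow_mul]; norm_num
  have hodd : (-1 : ℝ) ^ (2 * n - 1) = -1 := by
    rw [show 2 * n - 1 = 2 * (n - 1) + 1 from by omega, pow_succ, pow_mul]; norm_num
  have hr : Real.sqrt n ^ 2 = (n : ℝ) := Real.sq_sqrt (n.cast_nonneg)
  constructor
  · intro x
    have hcomp : ((fun y => Real.exp (-(s ^ 2 * y ^ 2) / 2) *
        (hermite (2 * n) (s * y) + 2 * Real.sqrt n * hermite (2 * n - 1) (s * y))) ∘ Neg.neg)
        = fun y => Real.exp (-(s ^ 2 * y ^ 2) / 2) *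
        (hermite (2 * n) (s * y) + -(2 * Real.sqrt n) * hermite (2 * n - 1) (s * y)) := by
      funext y
      simp only [Function.comp_apply]
      rw [show s * (-y) = -(s * y) from by ring, hermite_neg, hermite_neg, heven, hodd,
        show (-y) ^ 2 = y ^ 2 from by ring]
      ring
    rw [hcomp, (psi_hasDerivAt s (-(2 * Real.sqrt n)) n hn x).deriv,
      hermite_rec2n n hn (s * x)]
    linear_combination (-(4 * s * Real.exp (-(s ^ 2 * x ^ 2) / 2) *
      hermite (2 * n - 1) (s * x))) * hr
  · intro x
    have hcomp : ((fun y => Real.exp (-(s ^ 2 * y ^ 2) / 2) *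
        (hermite (2 * n) (s * y) - 2 * Real.sqrt n * hermite (2 * n - 1) (s * y))) ∘ Neg.neg)
        = fun y => Real.exp (-(s ^ 2 * y ^ 2) / 2) *
        (hermite (2 * n) (s * y) + 2 * Real.sqrt n * hermite (2 * n - 1) (s * y)) := by
      funext y
      simp only [Function.comp_apply]
      rw [show s * (-y) = -(s * y) from by ring, hermite_neg, hermite_neg, heven, hodd,
        show (-y) ^ 2 = y ^ 2 from by ring]
      ring
    rw [hcomp, (psi_hasDerivAt s (2 * Real.sqrt n) n hn x).deriv,
      hermite_rec2n n hn (s * x)]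
    linear_combination (-(4 * s * Real.exp (-(s ^ 2 * x ^ 2) / 2) *
      hermite (2 * n - 1) (s * x))) * hr
end

section
/- (Orthogonality of the Hermite-type Dunkl-SUSY polynomials.) For n ∈ ℤ define Q_0(x) = 1, and for n ≥ 1: Q_n(x) = H_{2n}(x) + 2√n·H_{2n−1}(x) and Q_{−n}(x) = H_{2n}(x) − 2√n·H_{2n−1}(x). Then for all integers n ≠ m, ∫_{−∞}^{∞} e^{−x²}·Q_n(x)·Q_m(x) dx = 0, and for every integer n with |n| = k ≥ 1, ∫_{−∞}^{∞} e^{−x²}·Q_n(x)² dx = 2·2^{2k}·(2k)!·√π. -/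
open MeasureTheory Polynomial Filter Topology Real

/-- The Hermite-type Dunkl-SUSY polynomials: `Q₀ = 1`,
`Q_{±n} = H_{2n} ± 2√n·H_{2n-1}` for `n ≥ 1`. -/
noncomputable def QHermite (n : ℤ) (x : ℝ) : ℝ :=
  if n = 0 then 1
  else hermite (2 * n.natAbs) x +
    (if 0 < n then 1 else -1) * (2 * Real.sqrt n.natAbs * hermite (2 * n.natAbs - 1) x)


noncomputable def Hp : ℕ → Polynomial ℝ
  | 0 => 1
  | 1 => C 2 * X
  | (n + 2) => C 2 * X * Hp (n + 1) - C (2 * ((n : ℝ) + 1)) * Hp n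

lemma hermite_eval : ∀ (n : ℕ) (x : ℝ), hermite n x = (Hp n).eval x
  | 0, x => by simp [_root_.hermite, Hp]
  | 1, x => by simp [_root_.hermite, Hp]
  | (n + 2), x => by
    simp only [_root_.hermite, Hp, hermite_eval (n + 1) x, hermite_eval n x, eval_sub,
      eval_mul, eval_add, eval_C, eval_X, eval_one]

lemma Hp_rec (n : ℕ) : Hp (n + 1) = C 2 * X * Hp n - C (2 * (n : ℝ)) * Hp (n - 1) := by
  cases n with
  | zero => simp [Hp]
  | succ k => rw [Hp]; push_cast; ring_nf

lemma Hp_deriv : ∀ n : ℕ, derivative (Hp n) = C (2 * (n : ℝ)) * Hp (n - 1)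
  | 0 => by simp [Hp]
  | 1 => by simp [Hp]
  | (n + 2) => by
    rw [Hp]
    simp only [derivative_sub, derivative_mul, derivative_C, derivative_X, zero_mul, mul_one,
      zero_add, add_zero, mul_zero]
    rw [Hp_deriv (n + 1), Hp_deriv n]
    simp only [Nat.add_sub_cancel, Nat.succ_sub_one]
    have h := Hp_rec n
    have : C 2 * X * Hp n = Hp (n + 1) + C (2 * (n : ℝ)) * Hp (n - 1) := by
      rw [h]; ring
    push_cast
    calc C 2 * Hp (n + 1) + C 2 * X * (C (2 * ((n:ℝ) + 1)) * Hp n)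
          - C (2 * ((n:ℝ) + 1)) * (C (2 * (n:ℝ)) * Hp (n - 1))
        = C 2 * Hp (n+1) + C (2 * ((n:ℝ)+1)) * (C 2 * X * Hp n - C (2*(n:ℝ)) * Hp (n-1)) := by ring
      _ = C 2 * Hp (n+1) + C (2 * ((n:ℝ)+1)) * Hp (n+1) := by rw [← h]
      _ = C (2 * ((n:ℝ) + 2)) * Hp (n + 1) := by
          simp only [map_mul, map_add, map_one, map_ofNat]; ring

lemma integrable_pg (P : ℝ[X]) : Integrable fun x : ℝ => Real.exp (-x ^ 2) * P.eval x := by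
  induction P using Polynomial.induction_on' with
  | add p q hp hq =>
    have := hp.add hq
    refine this.congr (Eventually.of_forall fun x => ?_)
    simp [mul_add]
  | monomial n a =>
    have h : Integrable fun x : ℝ => x ^ (n : ℝ) * Real.exp (-1 * x ^ 2) :=
      integrable_rpow_mul_exp_neg_mul_sq one_pos
        (lt_of_lt_of_le neg_one_lt_zero (Nat.cast_nonneg n))
    refine (h.const_mul a).congr (Eventually.of_forall fun x => ?_)
    simp only [Real.rpow_natCast, eval_monomial, neg_mul, one_mul]
    ring

lemma tendsto_pg (P : ℝ[X]) :
    Tendsto (fun x : ℝ => Real.exp (-x ^ 2) * P.eval x) (Filter.cocompact ℝ) (𝓝 0) := by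
  induction P using Polynomial.induction_on' with
  | add p q hp hq =>
    have := hp.add hq
    rw [add_zero] at this
    refine this.congr fun x => ?_
    simp [mul_add]
  | monomial n a =>
    have h := (tendsto_rpow_abs_mul_exp_neg_mul_sq_cocompact one_pos (n : ℝ)).const_mul |a|
    rw [mul_zero] at h
    refine squeeze_zero_norm (fun x => ?_) h
    simp only [Real.rpow_natCast, eval_monomial, norm_mul, Real.norm_eq_abs, abs_exp, abs_mul,
      abs_pow, neg_mul, one_mul]
    exact le_of_eq (by ring)

lemma tendsto_pg_atTop (P : ℝ[X]) :
    Tendsto (fun x : ℝ => Real.exp (-x ^ 2) * P.eval x) atTop (𝓝 0) :=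
  (tendsto_pg P).mono_left (by rw [cocompact_eq_atBot_atTop]; exact le_sup_right)

lemma tendsto_pg_atBot (P : ℝ[X]) :
    Tendsto (fun x : ℝ => Real.exp (-x ^ 2) * P.eval x) atBot (𝓝 0) :=
  (tendsto_pg P).mono_left (by rw [cocompact_eq_atBot_atTop]; exact le_sup_left)

lemma key (P : ℝ[X]) :
    ∫ x : ℝ, Real.exp (-x ^ 2) * (derivative P - C 2 * X * P).eval x = 0 := by
  have hd : ∀ x : ℝ, HasDerivAt (fun x : ℝ => Real.exp (-x ^ 2) * P.eval x)
      (Real.exp (-x ^ 2) * (derivative P - C 2 * X * P).eval x) x := by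
    intro x
    have h1 : HasDerivAt (fun x : ℝ => Real.exp (-x ^ 2))
        (Real.exp (-x ^ 2) * (-(2 * x))) x := by
      have hx : HasDerivAt (fun x : ℝ => -x ^ 2) (-(2 * x)) x := by
        simpa using ((hasDerivAt_pow 2 x).fun_neg)
      exact hx.exp
    have h2 := P.hasDerivAt x
    have : HasDerivAt (fun x : ℝ => Real.exp (-x ^ 2) * P.eval x) _ x := h1.fun_mul h2
    convert this using 1
    simp only [eval_sub, eval_mul, eval_C, eval_X]
    ring
  have hi := integrable_pg (derivative P - C 2 * X * P)
  have := MeasureTheory.integral_of_hasDerivAt_of_tendsto hd hi (tendsto_pg_atBot P)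
    (tendsto_pg_atTop P)
  simpa using this

noncomputable def J (m n : ℕ) : ℝ :=
  ∫ x : ℝ, Real.exp (-x ^ 2) * (Hp m).eval x * (Hp n).eval x

lemma integrable_J (m n : ℕ) :
    Integrable fun x : ℝ => Real.exp (-x ^ 2) * (Hp m).eval x * (Hp n).eval x := by
  refine (integrable_pg (Hp m * Hp n)).congr (Eventually.of_forall fun x => ?_)
  simp [mul_assoc]

lemma J_symm (m n : ℕ) : J m n = J n m := by
  unfold J
  congr 1; funext x; ring

lemma J_zero_succ (n : ℕ) : J 0 (n + 1) = 0 := by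
  have hk := key (Hp n)
  have hpoly : derivative (Hp n) - C 2 * X * Hp n = -Hp (n + 1) := by
    rw [Hp_deriv n, Hp_rec n]; ring
  rw [hpoly] at hk
  unfold J
  rw [← neg_eq_zero, ← integral_neg, ← hk]
  congr 1; funext x
  simp only [eval_neg, eval_mul, eval_one, Hp, mul_one]
  ring

lemma J_succ_succ (m n : ℕ) : J (m + 1) (n + 1) = (2 * ((m : ℝ) + 1)) * J m n := by
  have hk := key (Hp (m + 1) * Hp n)
  have hpoly : derivative (Hp (m + 1) * Hp n) - C 2 * X * (Hp (m + 1) * Hp n)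
      = C (2 * ((m : ℝ) + 1)) * (Hp m * Hp n) - Hp (m + 1) * Hp (n + 1) := by
    rw [derivative_mul, Hp_deriv (m + 1), Hp_deriv n, Hp_rec n]
    simp only [Nat.add_sub_cancel]
    push_cast
    ring
  rw [hpoly] at hk
  have hsplit : ∫ x : ℝ, Real.exp (-x ^ 2) *
      (C (2 * ((m : ℝ) + 1)) * (Hp m * Hp n) - Hp (m + 1) * Hp (n + 1)).eval x
      = (2 * ((m : ℝ) + 1)) * J m n - J (m + 1) (n + 1) := by
    have h1 : (fun x : ℝ => Real.exp (-x ^ 2) *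
        (C (2 * ((m : ℝ) + 1)) * (Hp m * Hp n) - Hp (m + 1) * Hp (n + 1)).eval x)
        = fun x : ℝ => (2 * ((m : ℝ) + 1)) * (Real.exp (-x ^ 2) * (Hp m).eval x * (Hp n).eval x)
          - Real.exp (-x ^ 2) * (Hp (m + 1)).eval x * (Hp (n + 1)).eval x := by
      funext x; simp; ring
    rw [h1, integral_sub ((integrable_J m n).const_mul _) (integrable_J (m + 1) (n + 1)),
      MeasureTheory.integral_const_mul]
    unfold J
    rfl
  rw [hsplit] at hk
  linarith

lemma J_00 : J 0 0 = Real.sqrt Real.pi := by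
  unfold J
  simp only [Hp, eval_one, mul_one]
  calc (∫ x : ℝ, Real.exp (-x ^ 2)) = ∫ x : ℝ, Real.exp (-1 * x ^ 2) := by
        congr 1; funext x; norm_num
    _ = Real.sqrt (Real.pi / 1) := integral_gaussian 1
    _ = Real.sqrt Real.pi := by norm_num

lemma J_diag : ∀ n : ℕ, J n n = 2 ^ n * (Nat.factorial n) * Real.sqrt Real.pi
  | 0 => by simpa using J_00
  | (n + 1) => by
    rw [J_succ_succ, J_diag n, Nat.factorial_succ]
    push_cast
    ring

lemma J_ne : ∀ m n : ℕ, m ≠ n → J m n = 0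
  | 0, 0, h => absurd rfl h
  | 0, (n + 1), _ => J_zero_succ n
  | (m + 1), 0, _ => by rw [J_symm]; exact J_zero_succ m
  | (m + 1), (n + 1), h => by
    rw [J_succ_succ, J_ne m n (by omega), mul_zero]

noncomputable def cQ (n : ℤ) : ℝ :=
  if n = 0 then 0 else (if 0 < n then 1 else -1) * (2 * Real.sqrt n.natAbs)

lemma Q_rep (n : ℤ) (x : ℝ) :
    QHermite n x = (Hp (2 * n.natAbs)).eval x + cQ n * (Hp (2 * n.natAbs - 1)).eval x := by
  unfold QHermite cQ
  by_cases h : n = 0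
  · simp [h, Hp]
  · rw [if_neg h, if_neg h, hermite_eval, hermite_eval]; ring

lemma cQ_neg (n : ℤ) : cQ (-n) = -cQ n := by
  unfold cQ
  rcases lt_trichotomy n 0 with h | h | h
  · simp only [if_neg (show ¬(-n = 0) by omega), if_neg (show ¬(n = 0) by omega),
      if_pos (show 0 < -n by omega), if_neg (show ¬(0 < n) by omega), Int.natAbs_neg]
    ring
  · simp [h]
  · simp only [if_neg (show ¬(-n = 0) by omega), if_neg (show ¬(n = 0) by omega),
      if_neg (show ¬(0 < -n) by omega), if_pos h, Int.natAbs_neg]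
    ring

lemma cQ_mul_self (n : ℤ) (hn : n ≠ 0) : cQ n * cQ n = 4 * (n.natAbs : ℝ) := by
  unfold cQ
  have h : Real.sqrt n.natAbs * Real.sqrt n.natAbs = (n.natAbs : ℝ) :=
    Real.mul_self_sqrt (by positivity)
  rw [if_neg hn]
  by_cases h0 : 0 < n
  · rw [if_pos h0]; linear_combination 4 * h
  · rw [if_neg h0]; linear_combination 4 * h

lemma cross (n m : ℤ) :
    ∫ x : ℝ, Real.exp (-x ^ 2) * QHermite n x * QHermite m x
      = J (2 * n.natAbs) (2 * m.natAbs) + cQ n * J (2 * n.natAbs - 1) (2 * m.natAbs)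
        + cQ m * J (2 * n.natAbs) (2 * m.natAbs - 1)
        + cQ n * cQ m * J (2 * n.natAbs - 1) (2 * m.natAbs - 1) := by
  have I1 := integrable_J (2 * n.natAbs) (2 * m.natAbs)
  have I2 := (integrable_J (2 * n.natAbs - 1) (2 * m.natAbs)).const_mul (cQ n)
  have I3 := (integrable_J (2 * n.natAbs) (2 * m.natAbs - 1)).const_mul (cQ m)
  have I4 := (integrable_J (2 * n.natAbs - 1) (2 * m.natAbs - 1)).const_mul (cQ n * cQ m)
  have h1 : (fun x : ℝ => Real.exp (-x ^ 2) * QHermite n x * QHermite m x)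
      = fun x : ℝ => Real.exp (-x ^ 2) * (Hp (2 * n.natAbs)).eval x * (Hp (2 * m.natAbs)).eval x
        + (cQ n * (Real.exp (-x ^ 2) * (Hp (2 * n.natAbs - 1)).eval x * (Hp (2 * m.natAbs)).eval x)
        + (cQ m * (Real.exp (-x ^ 2) * (Hp (2 * n.natAbs)).eval x * (Hp (2 * m.natAbs - 1)).eval x)
        + cQ n * cQ m * (Real.exp (-x ^ 2) * (Hp (2 * n.natAbs - 1)).eval x
            * (Hp (2 * m.natAbs - 1)).eval x))) := by
    funext x
    rw [Q_rep, Q_rep]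
    ring
  have I34 : Integrable (fun x : ℝ => cQ m * (Real.exp (-x ^ 2) * (Hp (2 * n.natAbs)).eval x * (Hp (2 * m.natAbs - 1)).eval x) + cQ n * cQ m * (Real.exp (-x ^ 2) * (Hp (2 * n.natAbs - 1)).eval x * (Hp (2 * m.natAbs - 1)).eval x)) volume := I3.add I4
  have I234 : Integrable (fun x : ℝ => cQ n * (Real.exp (-x ^ 2) * (Hp (2 * n.natAbs - 1)).eval x * (Hp (2 * m.natAbs)).eval x) + (cQ m * (Real.exp (-x ^ 2) * (Hp (2 * n.natAbs)).eval x * (Hp (2 * m.natAbs - 1)).eval x) + cQ n * cQ m * (Real.exp (-x ^ 2) * (Hp (2 * n.natAbs - 1)).eval x * (Hp (2 * m.natAbs - 1)).eval x))) volume := I2.add I34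
  rw [h1, integral_add I1 I234, integral_add I2 I34, integral_add I3 I4,
    MeasureTheory.integral_const_mul, MeasureTheory.integral_const_mul,
    MeasureTheory.integral_const_mul]
  unfold J
  ring

/-- Orthogonality of the Hermite-type Dunkl-SUSY polynomials. -/
theorem QHermite_orthogonality :
    (∀ n m : ℤ, n ≠ m → ∫ x : ℝ, Real.exp (-x ^ 2) * QHermite n x * QHermite m x = 0) ∧
    (∀ n : ℤ, 1 ≤ n.natAbs →
      ∫ x : ℝ, Real.exp (-x ^ 2) * QHermite n x ^ 2
        = 2 * 2 ^ (2 * n.natAbs) * Nat.factorial (2 * n.natAbs) * Real.sqrt Real.pi) := by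
  have hfac : ∀ k : ℕ, 1 ≤ k →
      (Nat.factorial (2 * k) : ℝ) = (2 * k) * Nat.factorial (2 * k - 1) := by
    intro k hk
    have h1 : (2 * k - 1) + 1 = 2 * k := by omega
    calc ((Nat.factorial (2 * k)) : ℝ) = ((Nat.factorial ((2 * k - 1) + 1)) : ℝ) := by rw [h1]
      _ = (((2 * k - 1) + 1 : ℕ) : ℝ) * Nat.factorial (2 * k - 1) := by
          rw [Nat.factorial_succ]; push_cast; ring
      _ = ((2 * k : ℕ) : ℝ) * Nat.factorial (2 * k - 1) := by rw [h1]
      _ = (2 * k : ℝ) * Nat.factorial (2 * k - 1) := by push_cast; ring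
  have hpow : ∀ k : ℕ, 1 ≤ k → (2 : ℝ) ^ (2 * k) = 2 * 2 ^ (2 * k - 1) := by
    intro k hk
    have h1 : (2 * k - 1) + 1 = 2 * k := by omega
    have h2 : (2 : ℝ) ^ (2 * k) = (2 : ℝ) ^ ((2 * k - 1) + 1) := by rw [h1]
    rw [h2, pow_succ]
    ring
  constructor
  · intro n m hnm
    rw [cross]
    by_cases h : n.natAbs = m.natAbs
    · have hn0 : n ≠ 0 := by omega
      have hk : 1 ≤ n.natAbs := by omega
      have hm : m = -n := by omega
      subst hm
      simp only [Int.natAbs_neg, cQ_neg]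
      rw [J_diag, J_diag, J_ne _ _ (by omega), J_ne _ _ (by omega),
        hfac n.natAbs hk, hpow n.natAbs hk]
      have hcq := cQ_mul_self n hn0
      push_cast
      linear_combination (-(2:ℝ) ^ (2 * n.natAbs - 1) * Nat.factorial (2 * n.natAbs - 1)
        * Real.sqrt Real.pi) * hcq
    · rw [J_ne _ _ (by omega), J_ne _ _ (by omega), J_ne _ _ (by omega), J_ne _ _ (by omega)]
      ring
  · intro n hn
    have hn0 : n ≠ 0 := by omega
    have h2 : (∫ x : ℝ, Real.exp (-x ^ 2) * QHermite n x ^ 2)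
        = ∫ x : ℝ, Real.exp (-x ^ 2) * QHermite n x * QHermite n x := by
      congr 1; funext x; ring
    rw [h2, cross, J_diag, J_diag, J_ne _ _ (by omega), J_ne _ _ (by omega),
      hfac n.natAbs hn, hpow n.natAbs hn]
    have hcq := cQ_mul_self n hn0
    push_cast
    linear_combination ((2:ℝ) ^ (2 * n.natAbs - 1) * Nat.factorial (2 * n.natAbs - 1)
      * Real.sqrt Real.pi) * hcq
end

section
/- (Theorem 5.1, sufficiency.) Let μ be a measure on ℝ and (S_n)_{n≥0} measurable real-valued functions with S_j·S_l μ-integrable for all j, l, satisfying the orthogonality relations ∫ S_j·S_l dμ = k_j·δ_{jl} with k_j > 0 for all j. For n ≥ 1 set a_n = √(k_{2n}/k_{2n−1}) and define Q_n = S_{2n} + a_n·S_{2n−1}, Q_{−n} = S_{2n} − a_n·S_{2n−1}, and Q_0 = S_0. Then the doubly indexed family (Q_n)_{n∈ℤ} is orthogonal: ∫ Q_n·Q_m dμ = 0 for all integers n ≠ m. If moreover each S_j has parity S_j(−x) = (−1)^j·S_j(x), then Q_{−n}(x) = Q_n(−x) for all n ≥ 1 and x ∈ ℝ. -/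
open MeasureTheory

private lemma expand_integral (μ : Measure ℝ) (S : ℕ → ℝ → ℝ) (k : ℕ → ℝ)
    (hint : ∀ j l, Integrable (fun x => S j x * S l x) μ)
    (horth : ∀ j l, ∫ x, S j x * S l x ∂μ = if j = l then k j else 0)
    (a b a' b' : ℕ) (c d : ℝ) :
    ∫ x, (S a x + c * S b x) * (S a' x + d * S b' x) ∂μ =
      (if a = a' then k a else 0) + d * (if a = b' then k a else 0)
      + c * (if b = a' then k b else 0) + c * d * (if b = b' then k b else 0) := by
  have h1 := hint a a'
  have h2 := (hint a b').const_mul d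
  have h3 := (hint b a').const_mul c
  have h4 := (hint b b').const_mul (c * d)
  have heq : (fun x => (S a x + c * S b x) * (S a' x + d * S b' x)) =
      fun x => (S a x * S a' x + d * (S a x * S b' x))
        + (c * (S b x * S a' x) + c * d * (S b x * S b' x)) := by
    funext x; ring
  have e1 : Integrable (fun x => S a x * S a' x + d * (S a x * S b' x)) μ := h1.add h2
  have e2 : Integrable (fun x => c * (S b x * S a' x) + c * d * (S b x * S b' x)) μ := h3.add h4
  rw [heq, integral_add e1 e2, integral_add h1 h2, integral_add h3 h4,
    integral_const_mul, integral_const_mul, integral_const_mul, horth, horth, horth, horth]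
  ring

/-- Theorem 5.1, sufficiency: the family `Q₀ = S₀`, `Q_{±n} = S_{2n} ± a_n S_{2n-1}`
(with `a_n = √(k_{2n}/k_{2n-1})`) built from an orthogonal family `(S_j)` is orthogonal,
and inherits the reflection property from the parity of the `S_j`. -/
theorem dunkl_susy_sufficiency (μ : Measure ℝ) (S : ℕ → ℝ → ℝ) (k : ℕ → ℝ)
    (hmeas : ∀ j, Measurable (S j))
    (hint : ∀ j l, Integrable (fun x => S j x * S l x) μ)
    (horth : ∀ j l, ∫ x, S j x * S l x ∂μ = if j = l then k j else 0)
    (hk : ∀ j, 0 < k j)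
    (Q : ℤ → ℝ → ℝ)
    (hQ0 : ∀ x, Q 0 x = S 0 x)
    (hQp : ∀ n : ℕ, 1 ≤ n → ∀ x,
      Q (n : ℤ) x = S (2 * n) x + Real.sqrt (k (2 * n) / k (2 * n - 1)) * S (2 * n - 1) x)
    (hQm : ∀ n : ℕ, 1 ≤ n → ∀ x,
      Q (-(n : ℤ)) x = S (2 * n) x - Real.sqrt (k (2 * n) / k (2 * n - 1)) * S (2 * n - 1) x) :
    (∀ n m : ℤ, n ≠ m → ∫ x, Q n x * Q m x ∂μ = 0) ∧
    ((∀ j : ℕ, ∀ x : ℝ, S j (-x) = (-1 : ℝ) ^ j * S j x) →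
      ∀ n : ℕ, 1 ≤ n → ∀ x : ℝ, Q (-(n : ℤ)) x = Q (n : ℤ) (-x)) := by
  -- coefficient function
  set C : ℤ → ℝ := fun n =>
    (n.sign : ℝ) * Real.sqrt (k (2 * n.natAbs) / k (2 * n.natAbs - 1)) with hCdef
  have hrep : ∀ (n : ℤ) (x : ℝ),
      Q n x = S (2 * n.natAbs) x + C n * S (2 * n.natAbs - 1) x := by
    intro n x
    rcases lt_trichotomy n 0 with h | h | h
    · obtain ⟨p, hp1, rfl⟩ : ∃ p : ℕ, 1 ≤ p ∧ n = -(p : ℤ) := ⟨n.natAbs, by omega, by omega⟩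
      have hs : ((-(p : ℤ)).sign : ℝ) = -1 := by
        rw [Int.sign_eq_neg_one_iff_neg.mpr (by exact_mod_cast h)]; norm_num
      have hna : (-(p : ℤ)).natAbs = p := by omega
      rw [hQm p hp1 x, hCdef]
      simp only [hna, hs]
      ring
    · subst h
      rw [hQ0 x, hCdef]
      norm_num
    · obtain ⟨p, hp1, rfl⟩ : ∃ p : ℕ, 1 ≤ p ∧ n = (p : ℤ) := ⟨n.natAbs, by omega, by omega⟩
      have hs : (((p : ℤ)).sign : ℝ) = 1 := by
        rw [Int.sign_eq_one_iff_pos.mpr h]; norm_num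
      have hna : ((p : ℤ)).natAbs = p := by omega
      rw [hQp p hp1 x, hCdef]
      simp only [hna, hs]
      ring
  constructor
  · intro n m hnm
    have key : ∫ x, Q n x * Q m x ∂μ =
        (if 2 * n.natAbs = 2 * m.natAbs then k (2 * n.natAbs) else 0)
        + C m * (if 2 * n.natAbs = 2 * m.natAbs - 1 then k (2 * n.natAbs) else 0)
        + C n * (if 2 * n.natAbs - 1 = 2 * m.natAbs then k (2 * n.natAbs - 1) else 0)
        + C n * C m * (if 2 * n.natAbs - 1 = 2 * m.natAbs - 1 then k (2 * n.natAbs - 1) else 0) := by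
      rw [show (fun x => Q n x * Q m x) =
          fun x => (S (2 * n.natAbs) x + C n * S (2 * n.natAbs - 1) x)
            * (S (2 * m.natAbs) x + C m * S (2 * m.natAbs - 1) x) from
          funext fun x => by rw [hrep, hrep]]
      exact expand_integral μ S k hint horth _ _ _ _ _ _
    rw [key]
    by_cases h : n.natAbs = m.natAbs
    · have hm0 : m ≠ 0 := by omega
      have hp : 1 ≤ m.natAbs := by omega
      rw [if_pos (by omega), if_neg (by omega), if_neg (by omega), if_pos (by omega)]
      have hnm' : n = -m := by omega
      have hs2 : (m.sign : ℝ) * (m.sign : ℝ) = 1 := by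
        rcases lt_or_gt_of_ne hm0 with hm | hm
        · rw [Int.sign_eq_neg_one_iff_neg.mpr hm]; norm_num
        · rw [Int.sign_eq_one_iff_pos.mpr hm]; norm_num
      have hsneg : ((-m).sign : ℝ) = -(m.sign : ℝ) := by
        rw [Int.sign_neg]; push_cast; ring
      have hsq : Real.sqrt (k (2 * m.natAbs) / k (2 * m.natAbs - 1))
          * Real.sqrt (k (2 * m.natAbs) / k (2 * m.natAbs - 1))
          = k (2 * m.natAbs) / k (2 * m.natAbs - 1) :=
        Real.mul_self_sqrt (div_nonneg (hk _).le (hk _).le)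
      have hCC : C n * C m = -(k (2 * m.natAbs) / k (2 * m.natAbs - 1)) := by
        subst hnm'
        rw [hCdef]
        simp only [Int.natAbs_neg, hsneg]
        nlinarith [hs2, hsq]
      rw [show 2 * n.natAbs = 2 * m.natAbs from by omega, hCC,
        mul_zero, mul_zero, add_zero, add_zero]
      rw [neg_mul, div_mul_cancel₀ _ (hk (2 * m.natAbs - 1)).ne']
      ring
    · rw [if_neg (by omega), if_neg (by omega), if_neg (by omega), if_neg (by omega)]
      ring
  · intro hpar n hn x
    rw [hQm n hn x, hQp n hn (-x), hpar, hpar]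
    have he : ((-1 : ℝ)) ^ (2 * n) = 1 := by
      rw [pow_mul]; norm_num
    have ho : ((-1 : ℝ)) ^ (2 * n - 1) = -1 := Odd.neg_one_pow ⟨n - 1, by omega⟩
    rw [he, ho]
    ring
end

section
/- (Theorem 5.2, first recurrence relation.) Let (γ_n)_{n≥1} and (a_n)_{n≥1} be real numbers with a_n ≠ 0 for all n ≥ 1, and define polynomials S_{−1} = 0, S_0 = 1, S_n(x) = x·S_{n−1}(x) − γ_n·S_{n−2}(x) for n ≥ 1. Set Q_0 = 1 and, for n ≥ 1, Q_n = S_{2n} + a_n·S_{2n−1}, Q_{−n} = S_{2n} − a_n·S_{2n−1}. Then for every n ≥ 1, the polynomial identity Q_{n+1}(x) = (1/2)·[x² + (a_{n+1} − γ_{2n+1}/a_n)·x − γ_{2n+2} − γ_{2n+1}·a_{n+1}/a_n]·Q_n(x) + (1/2)·[x² + (a_{n+1} + γ_{2n+1}/a_n)·x − γ_{2n+2} + γ_{2n+1}·a_{n+1}/a_n]·Q_{−n}(x) holds in ℝ[x]. -/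
open Polynomial

/-- Theorem 5.2, first recurrence relation for the Dunkl-SUSY polynomials
`Q_{±n} = S_{2n} ± a_n S_{2n-1}` built from the monic symmetric orthogonal
polynomials `S_n(x) = x·S_{n-1}(x) - γ_n·S_{n-2}(x)`. -/
theorem dunkl_susy_recurrence_first (γ a : ℕ → ℝ) (ha : ∀ n, 1 ≤ n → a n ≠ 0)
    (S : ℕ → Polynomial ℝ)
    (hS0 : S 0 = 1)
    (hS1 : S 1 = X)
    (hSrec : ∀ n : ℕ, S (n + 2) = X * S (n + 1) - C (γ (n + 2)) * S n)
    (Qp Qm : ℕ → Polynomial ℝ)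
    (hQp : ∀ n : ℕ, 1 ≤ n → Qp n = S (2 * n) + C (a n) * S (2 * n - 1))
    (hQm : ∀ n : ℕ, 1 ≤ n → Qm n = S (2 * n) - C (a n) * S (2 * n - 1)) :
    ∀ n : ℕ, 1 ≤ n →
      Qp (n + 1) =
        C (1 / 2) * (X ^ 2 + C (a (n + 1) - γ (2 * n + 1) / a n) * X
          - C (γ (2 * n + 2) + γ (2 * n + 1) * a (n + 1) / a n)) * Qp n
        + C (1 / 2) * (X ^ 2 + C (a (n + 1) + γ (2 * n + 1) / a n) * X
          - C (γ (2 * n + 2) - γ (2 * n + 1) * a (n + 1) / a n)) * Qm n := by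
  intro n hn
  obtain ⟨k, rfl⟩ : ∃ k, n = k + 1 := ⟨n - 1, by omega⟩
  · have hb : a (k + 1) ≠ 0 := ha (k + 1) (Nat.le_add_left 1 k)
    have hi : C (a (k + 1)) * C ((a (k + 1))⁻¹) = (1 : Polynomial ℝ) := by
      rw [← C_mul, mul_inv_cancel₀ hb, C_1]
    have h1 : Qp (k + 1) = S (2 * k + 2) + C (a (k + 1)) * S (2 * k + 1) := by
      have := hQp (k + 1) (Nat.le_add_left 1 k)
      convert this using 4 <;> omega
    have h2 : Qm (k + 1) = S (2 * k + 2) - C (a (k + 1)) * S (2 * k + 1) := by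
      have := hQm (k + 1) (Nat.le_add_left 1 k)
      convert this using 4 <;> omega
    have h3 : Qp (k + 1 + 1) = S (2 * k + 4) + C (a (k + 2)) * S (2 * k + 3) := by
      have := hQp (k + 2) (by omega)
      convert this using 4 <;> omega
    have h4 : S (2 * k + 4) = X * S (2 * k + 3) - C (γ (2 * k + 4)) * S (2 * k + 2) := by
      have := hSrec (2 * k + 2); convert this using 3 <;> omega
    have h5 : S (2 * k + 3) = X * S (2 * k + 2) - C (γ (2 * k + 3)) * S (2 * k + 1) := by
      have := hSrec (2 * k + 1); convert this using 3 <;> omega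
    have e1 : 2 * (k + 1) + 1 = 2 * k + 3 := by ring
    have e2 : 2 * (k + 1) + 2 = 2 * k + 4 := by ring
    rw [h1, h2, h3, h4, h5, e1, e2]
    have ra : ∀ x : ℝ, x / a (k + 1) = x * (a (k + 1))⁻¹ := fun x => div_eq_mul_inv x _
    simp only [ra, map_sub, map_add, map_mul]
    have hh : C ((1 : ℝ) / 2) * 2 = (1 : Polynomial ℝ) := by
      rw [← map_ofNat C 2, ← C_mul]
      norm_num
    linear_combination
      ((-(X ^ 2 + C (a (k + 2)) * X - C (γ (2 * k + 4))) * S (2 * k + 2)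
        + (X + C (a (k + 2))) * C (γ (2 * k + 3)) * S (2 * k + 1)) * hh)
      + (2 * C ((1 : ℝ) / 2) * (X + C (a (k + 2))) * C (γ (2 * k + 3)) * S (2 * k + 1)) * hi
end

section
/- (Theorem 5.2, second recurrence relation.) Let (γ_n)_{n≥1} and (a_n)_{n≥1} be real numbers with a_n ≠ 0 for all n ≥ 1, and define polynomials S_{−1} = 0, S_0 = 1, S_n(x) = x·S_{n−1}(x) − γ_n·S_{n−2}(x) for n ≥ 1. Set Q_0 = 1 and, for n ≥ 1, Q_n = S_{2n} + a_n·S_{2n−1}, Q_{−n} = S_{2n} − a_n·S_{2n−1}. Then for every n ≥ 1, the polynomial identity Q_{−(n+1)}(x) = (1/2)·[x² − (a_{n+1} + γ_{2n+1}/a_n)·x − γ_{2n+2} + γ_{2n+1}·a_{n+1}/a_n]·Q_n(x) + (1/2)·[x² − (a_{n+1} − γ_{2n+1}/a_n)·x − γ_{2n+2} − γ_{2n+1}·a_{n+1}/a_n]·Q_{−n}(x) holds in ℝ[x]. -/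
open Polynomial

/-- Theorem 5.2, second recurrence relation for the Dunkl-SUSY polynomials
`Q_{±n} = S_{2n} ± a_n S_{2n-1}` built from the monic symmetric orthogonal
polynomials `S_n(x) = x·S_{n-1}(x) - γ_n·S_{n-2}(x)`. -/
theorem dunkl_susy_recurrence_second (γ a : ℕ → ℝ) (ha : ∀ n, 1 ≤ n → a n ≠ 0)
    (S : ℕ → Polynomial ℝ)
    (hS0 : S 0 = 1)
    (hS1 : S 1 = X)
    (hSrec : ∀ n : ℕ, S (n + 2) = X * S (n + 1) - C (γ (n + 2)) * S n)
    (Qp Qm : ℕ → Polynomial ℝ)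
    (hQp : ∀ n : ℕ, 1 ≤ n → Qp n = S (2 * n) + C (a n) * S (2 * n - 1))
    (hQm : ∀ n : ℕ, 1 ≤ n → Qm n = S (2 * n) - C (a n) * S (2 * n - 1)) :
    ∀ n : ℕ, 1 ≤ n →
      Qm (n + 1) =
        C (1 / 2) * (X ^ 2 - C (a (n + 1) + γ (2 * n + 1) / a n) * X
          - C (γ (2 * n + 2) - γ (2 * n + 1) * a (n + 1) / a n)) * Qp n
        + C (1 / 2) * (X ^ 2 - C (a (n + 1) - γ (2 * n + 1) / a n) * X
          - C (γ (2 * n + 2) + γ (2 * n + 1) * a (n + 1) / a n)) * Qm n := by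
  rintro n hn
  obtain ⟨m, rfl⟩ := Nat.exists_eq_add_of_le hn
  have h2 : 2 * (1 + m) = 2 * m + 2 := by ring
  have h3 : 2 * (1 + m) - 1 = 2 * m + 1 := by omega
  have h4 : 2 * (1 + m + 1) = 2 * m + 4 := by ring
  have h5 : 2 * (1 + m + 1) - 1 = 2 * m + 3 := by omega
  rw [hQm (1 + m + 1) (by omega), hQp (1 + m) hn, hQm (1 + m) hn, h3, h5, h2, h4,
    (by omega : 2 * m + 2 + 1 = 2 * m + 3), (by omega : 2 * m + 2 + 2 = 2 * m + 4)]
  have e1 : S (2 * m + 4) = X * S (2 * m + 3) - C (γ (2 * m + 4)) * S (2 * m + 2) := hSrec (2 * m + 2)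
  have e2 : S (2 * m + 3) = X * S (2 * m + 2) - C (γ (2 * m + 3)) * S (2 * m + 1) := hSrec (2 * m + 1)
  have han : a (1 + m) ≠ 0 := ha _ hn
  set u : ℝ := γ (2 * m + 3) / a (1 + m) with hu
  have r1 : γ (2 * m + 3) = u * a (1 + m) := (div_mul_cancel₀ _ han).symm
  rw [e1, e2, r1]
  have r2 : u * a (1 + m) * a (1 + m + 1) / a (1 + m) = u * a (1 + m + 1) := by
    field_simp
  rw [r2]
  have key : C ((1:ℝ)/2) * 2 = 1 := by
    rw [show ((2:ℝ[X]) = C (2:ℝ)) from (map_ofNat C 2).symm, ← C_mul]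
    norm_num
  simp only [map_add, map_sub, map_mul]
  linear_combination (-(X * (X * S (2 * m + 2) - C u * C (a (1 + m)) * S (2 * m + 1))
      - C (γ (2 * m + 4)) * S (2 * m + 2)
      - C (a (1 + m + 1)) * (X * S (2 * m + 2) - C u * C (a (1 + m)) * S (2 * m + 1)))) * key
end
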